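/- Let B ∈ M₂(ℤ) be a matrix with det B ≠ 0 such that no prime q ≠ p divides det B, and suppose there exist U, V ∈ GL₂(ℤ_p) with B = U·A·V when B and A are regarded as matrices over ℤ_p. Then there exist matrices U', V' ∈ GL₂(ℤ) with B = U'·A·V' over ℤ. -/

import Mathlib

open Matrix

abbrev M2 := Matrix (Fin 2) (Fin 2) ℤ

noncomputable def glOf (M : M2) (h : IsUnit M.det) : GL (Fin 2) ℤ :=
  ((Matrix.isUnit_iff_isUnit_det M).mpr h).unit

@[simp] lemma glOf_coe (M : M2) (h : IsUnit M.det) : (glOf M h : M2) = M :=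
  IsUnit.unit_spec _

def MEq (B C : M2) : Prop :=
  ∃ U V : GL (Fin 2) ℤ, C = (U : M2) * B * (V : M2)

lemma MEq.refl (B : M2) : MEq B B := ⟨1, 1, by simp⟩

lemma MEq.trans {A B C : M2} (h1 : MEq A B) (h2 : MEq B C) : MEq A C := by
  obtain ⟨U, V, rfl⟩ := h1
  obtain ⟨U', V', rfl⟩ := h2
  exact ⟨U' * U, V * V', by simp [Units.val_mul, mul_assoc]⟩

lemma MEq.symm {A B : M2} (h : MEq A B) : MEq B A := by
  obtain ⟨U, V, rfl⟩ := h
  refine ⟨U⁻¹, V⁻¹, ?_⟩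
  have hU : ((U⁻¹ : GL (Fin 2) ℤ) : M2) * (U : M2) = 1 := by
    rw [← Units.val_mul]; simp
  have hV : ((V : GL (Fin 2) ℤ) : M2) * ((V⁻¹ : GL (Fin 2) ℤ) : M2) = 1 := by
    rw [← Units.val_mul]; simp
  calc A = (((U⁻¹ : GL (Fin 2) ℤ) : M2) * (U : M2)) * A *
        (((V : GL (Fin 2) ℤ) : M2) * ((V⁻¹ : GL (Fin 2) ℤ) : M2)) := by
        rw [hU, hV]; simp
    _ = ((U⁻¹ : GL (Fin 2) ℤ) : M2) * ((U : M2) * A * (V : M2)) *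
        ((V⁻¹ : GL (Fin 2) ℤ) : M2) := by simp only [mul_assoc]

lemma MEq.mul_left {B : M2} (U : M2) (h : IsUnit U.det) : MEq B (U * B) :=
  ⟨glOf U h, 1, by simp [mul_assoc]⟩

lemma MEq.mul_right {B : M2} (V : M2) (h : IsUnit V.det) : MEq B (B * V) :=
  ⟨1, glOf V h, by simp [mul_assoc]⟩

lemma bezout_right (a b : ℤ) (ha : a ≠ 0) :
    ∃ V : M2, V.det = 1 ∧ a * V 0 0 + b * V 1 0 = Int.gcd a b ∧
      a * V 0 1 + b * V 1 1 = 0 := by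
  set g : ℤ := (Int.gcd a b : ℤ) with hg
  have hgne : g ≠ 0 := by
    simp only [hg, ne_eq, Int.natCast_eq_zero, Int.gcd_eq_zero_iff]
    tauto
  obtain ⟨a', ha'⟩ : g ∣ a := Int.gcd_dvd_left a b
  obtain ⟨b', hb'⟩ : g ∣ b := Int.gcd_dvd_right a b
  set x := Int.gcdA a b
  set y := Int.gcdB a b
  have hbez : g = a * x + b * y := Int.gcd_eq_gcd_ab a b
  refine ⟨!![x, -b'; y, a'], ?_, ?_, ?_⟩
  · have h1 : g * (a' * x + b' * y) = g * 1 := by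
      linear_combination -hbez - x * ha' - y * hb'
    have key := mul_left_cancel₀ hgne h1
    rw [Matrix.det_fin_two_of]
    linear_combination key
  · show a * !![x, -b'; y, a'] 0 0 + b * !![x, -b'; y, a'] 1 0 = _
    show a * x + b * y = _
    exact hbez.symm
  · show a * !![x, -b'; y, a'] 0 1 + b * !![x, -b'; y, a'] 1 1 = 0
    show a * -b' + b * a' = 0
    rw [ha', hb']; ring

lemma bezout_left (a c : ℤ) (ha : a ≠ 0) :
    ∃ U : M2, U.det = 1 ∧ U 0 0 * a + U 0 1 * c = Int.gcd a c ∧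
      U 1 0 * a + U 1 1 * c = 0 := by
  obtain ⟨V, hdet, h1, h2⟩ := bezout_right a c ha
  exact ⟨Vᵀ, by rwa [Matrix.det_transpose], by simpa [mul_comm] using h1,
    by simpa [mul_comm] using h2⟩

lemma mul_apply2 (A B : M2) (i j : Fin 2) :
    (A * B) i j = A i 0 * B 0 j + A i 1 * B 1 j := by
  rw [Matrix.mul_apply, Fin.sum_univ_two]

lemma gcd_natAbs_le {a b : ℤ} (ha : a ≠ 0) : Int.gcd a b ≤ a.natAbs :=
  Nat.le_of_dvd (Int.natAbs_pos.mpr ha) (Nat.gcd_dvd_left _ _)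

lemma gcd_ne_zero {a b : ℤ} (ha : a ≠ 0) : (Int.gcd a b : ℤ) ≠ 0 := by
  simp only [ne_eq, Int.natCast_eq_zero, Int.gcd_eq_zero_iff, not_and]
  intro h; exact absurd h ha

lemma diagonalize : ∀ n : ℕ, ∀ B : M2, (B 0 0).natAbs ≤ n → B 0 0 ≠ 0 →
    ∃ d₁ d₂ : ℤ, MEq B (Matrix.diagonal ![d₁, d₂]) := by
  intro n
  induction n using Nat.strong_induction_on with
  | _ n IH =>
  intro B hle h00
  -- Step 1: clear the (0,1) entry
  obtain ⟨V1, hV1det, hV1a, hV1b⟩ := bezout_right (B 0 0) (B 0 1) h00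
  set B1 := B * V1 with hB1
  have e100 : B1 0 0 = Int.gcd (B 0 0) (B 0 1) := by rw [hB1, mul_apply2]; exact hV1a
  have e101 : B1 0 1 = 0 := by rw [hB1, mul_apply2]; exact hV1b
  have h100 : B1 0 0 ≠ 0 := by rw [e100]; exact gcd_ne_zero h00
  have hle1 : (B1 0 0).natAbs ≤ n := by
    rw [e100, Int.natAbs_natCast]
    exact le_trans (gcd_natAbs_le h00) hle
  have heq1 : MEq B B1 := MEq.mul_right V1 (hV1det ▸ isUnit_one)
  -- Step 2: clear the (1,0) entry
  obtain ⟨U2, hU2det, hU2a, hU2b⟩ := bezout_left (B1 0 0) (B1 1 0) h100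
  set B2 := U2 * B1 with hB2
  have e200 : B2 0 0 = Int.gcd (B1 0 0) (B1 1 0) := by rw [hB2, mul_apply2]; exact hU2a
  have e210 : B2 1 0 = 0 := by rw [hB2, mul_apply2]; exact hU2b
  have h200 : B2 0 0 ≠ 0 := by rw [e200]; exact gcd_ne_zero h100
  have hle2 : (B2 0 0).natAbs ≤ n := by
    rw [e200, Int.natAbs_natCast]
    exact le_trans (gcd_natAbs_le h100) hle1
  have heq2 : MEq B B2 := heq1.trans (MEq.mul_left U2 (hU2det ▸ isUnit_one))
  by_cases hdvd : B2 0 0 ∣ B2 0 1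
  · -- subtract a multiple of column 0 from column 1: done
    obtain ⟨q, hq⟩ := hdvd
    have hWdet : (!![1, -q; 0, 1] : M2).det = 1 := by
      rw [Matrix.det_fin_two_of]; ring
    refine ⟨B2 0 0, B2 1 1, heq2.trans ?_⟩
    have : B2 * !![1, -q; 0, 1] = Matrix.diagonal ![B2 0 0, B2 1 1] := by
      ext i j
      fin_cases i <;> fin_cases j <;>
        simp only [mul_apply2, Matrix.diagonal] <;>
        simp [Matrix.cons_val_zero, Matrix.cons_val_one, hq, e210] <;> ring
    have h := MEq.mul_right (B := B2) !![1, -q; 0, 1] (by rw [hWdet]; exact isUnit_one)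
    rwa [this] at h
  · -- strict decrease: recurse
    obtain ⟨V3, hV3det, hV3a, hV3b⟩ := bezout_right (B2 0 0) (B2 0 1) h200
    set B3 := B2 * V3 with hB3
    have e300 : B3 0 0 = Int.gcd (B2 0 0) (B2 0 1) := by rw [hB3, mul_apply2]; exact hV3a
    have h300 : B3 0 0 ≠ 0 := by rw [e300]; exact gcd_ne_zero h200
    have hlt : Int.gcd (B2 0 0) (B2 0 1) < (B2 0 0).natAbs := by
      refine lt_of_le_of_ne (gcd_natAbs_le h200) ?_
      intro hcon
      apply hdvd
      have : ((Int.gcd (B2 0 0) (B2 0 1) : ℤ)) ∣ B2 0 1 := Int.gcd_dvd_right _ _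
      rw [hcon] at this
      exact (Int.natAbs_dvd).mp this
    have hltn : Int.gcd (B2 0 0) (B2 0 1) < n := lt_of_lt_of_le hlt hle2
    obtain ⟨d₁, d₂, hd⟩ := IH _ hltn B3 (by rw [e300, Int.natAbs_natCast]) h300
    exact ⟨d₁, d₂, (heq2.trans (MEq.mul_right V3 (hV3det ▸ isUnit_one))).trans hd⟩

lemma dvd_entries {R : Type*} [CommRing R] {d : R} {B : Matrix (Fin 2) (Fin 2) R}
    (U V : Matrix (Fin 2) (Fin 2) R) (h : ∀ i j, d ∣ B i j) (i j : Fin 2) :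
    d ∣ (U * B * V) i j := by
  have m2 : ∀ (X Y : Matrix (Fin 2) (Fin 2) R) (i j : Fin 2),
      (X * Y) i j = X i 0 * Y 0 j + X i 1 * Y 1 j := fun X Y i j => by
    rw [Matrix.mul_apply, Fin.sum_univ_two]
  rw [m2, m2, m2]
  exact dvd_add
    (Dvd.dvd.mul_right (dvd_add ((h 0 0).mul_left _) ((h 1 0).mul_left _)) _)
    (Dvd.dvd.mul_right (dvd_add ((h 0 1).mul_left _) ((h 1 1).mul_left _)) _)

lemma nat_dvd_of_int_dvd {p n : ℕ} {d : ℤ} (h : (p : ℤ) ^ n ∣ d) : p ^ n ∣ d.natAbs := by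
  have : ((p ^ n : ℕ) : ℤ) ∣ (d.natAbs : ℤ) := by
    rw [Int.dvd_natAbs]; exact_mod_cast h
  exact_mod_cast this

lemma int_dvd_of_nat_dvd {p n : ℕ} {d : ℤ} (h : p ^ n ∣ d.natAbs) : (p : ℤ) ^ n ∣ d := by
  have : ((p ^ n : ℕ) : ℤ) ∣ (d.natAbs : ℤ) := Int.natCast_dvd_natCast.mpr h
  rw [Int.dvd_natAbs] at this; exact_mod_cast this

lemma exists_sign {d : ℤ} {t : ℕ} (h : d.natAbs = t) :
    ∃ s : ℤ, IsUnit s ∧ d = s * t := by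
  rcases Int.natAbs_eq d with h1 | h1
  · exact ⟨1, isUnit_one, by rw [h1, h]; ring⟩
  · exact ⟨-1, isUnit_one.neg, by rw [h1, h]; ring⟩

/-- Let `B ∈ M₂(ℤ)` with `det B ≠ 0`, such that no prime `q ≠ p`
divides `det B`. If there exist `U, V ∈ GL₂(ℤ_p)` with `B = U·A·V` over `ℤ_p`
(where `A = diag(p^l, p^{l+k})`), then there exist `U', V' ∈ GL₂(ℤ)` with
`B = U'·A·V'` over `ℤ`. -/
theorem stmt_10 (p : ℕ) [Fact p.Prime] (l k : ℕ) (B : Matrix (Fin 2) (Fin 2) ℤ)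
    (hdet : B.det ≠ 0)
    (hq : ∀ q : ℕ, q.Prime → q ≠ p → ¬ ((q : ℤ) ∣ B.det))
    (h : ∃ U V : GL (Fin 2) ℤ_[p],
        B.map (Int.cast : ℤ → ℤ_[p]) =
          (U : Matrix (Fin 2) (Fin 2) ℤ_[p]) *
            Matrix.diagonal ![(p : ℤ_[p]) ^ l, (p : ℤ_[p]) ^ (l + k)] *
            (V : Matrix (Fin 2) (Fin 2) ℤ_[p])) :
    ∃ U' V' : GL (Fin 2) ℤ,
      B = (U' : Matrix (Fin 2) (Fin 2) ℤ) *
            Matrix.diagonal ![(p : ℤ) ^ l, (p : ℤ) ^ (l + k)] *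
            (V' : Matrix (Fin 2) (Fin 2) ℤ) := by
  obtain ⟨U, V, hB⟩ := h
  have hp : p.Prime := Fact.out
  set L := l + (l + k) with hL
  set Dp : Matrix (Fin 2) (Fin 2) ℤ_[p] :=
    Matrix.diagonal ![(p : ℤ_[p]) ^ l, (p : ℤ_[p]) ^ (l + k)] with hDp
  -- (a) p^l divides every entry of B
  have hDdvd : ∀ i j : Fin 2, (p : ℤ_[p]) ^ l ∣ Dp i j := by
    intro i j
    fin_cases i <;> fin_cases j <;>
      simp only [hDp, Matrix.diagonal] <;>
      first
        | exact dvd_refl _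
        | exact dvd_zero _
        | exact pow_dvd_pow _ (Nat.le_add_right l k)
  have hBl : ∀ i j : Fin 2, (p : ℤ) ^ l ∣ B i j := by
    intro i j
    have h1 : (p : ℤ_[p]) ^ l ∣ (B.map (Int.cast : ℤ → ℤ_[p])) i j := by
      rw [hB]; exact dvd_entries _ _ hDdvd i j
    rw [Matrix.map_apply] at h1
    exact (PadicInt.pow_p_dvd_int_iff l (B i j)).mp h1
  -- (b) p^(l+1) does not divide every entry of B
  have hnot : ¬ ∀ i j : Fin 2, (p : ℤ) ^ (l + 1) ∣ B i j := by
    intro hall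
    have hU1 : ((U⁻¹ : GL (Fin 2) ℤ_[p]) : Matrix (Fin 2) (Fin 2) ℤ_[p]) * (U : _) = 1 := by
      rw [← Units.val_mul]; simp
    have hV1 : ((V : GL (Fin 2) ℤ_[p]) : Matrix (Fin 2) (Fin 2) ℤ_[p]) *
        ((V⁻¹ : GL (Fin 2) ℤ_[p]) : _) = 1 := by
      rw [← Units.val_mul]; simp
    have hD : Dp = ((U⁻¹ : GL (Fin 2) ℤ_[p]) : Matrix (Fin 2) (Fin 2) ℤ_[p]) *
        B.map (Int.cast : ℤ → ℤ_[p]) * ((V⁻¹ : GL (Fin 2) ℤ_[p]) : _) := by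
      rw [hB]
      calc Dp = (((U⁻¹ : GL (Fin 2) ℤ_[p]) : Matrix (Fin 2) (Fin 2) ℤ_[p]) * (U : _)) * Dp *
            (((V : GL (Fin 2) ℤ_[p]) : Matrix (Fin 2) (Fin 2) ℤ_[p]) *
              ((V⁻¹ : GL (Fin 2) ℤ_[p]) : _)) := by rw [hU1, hV1]; simp
        _ = _ := by simp only [mul_assoc]
    have hdvd00 : (p : ℤ_[p]) ^ (l + 1) ∣ Dp 0 0 := by
      rw [hD]
      refine dvd_entries _ _ (fun i j => ?_) 0 0
      rw [Matrix.map_apply]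
      exact (PadicInt.pow_p_dvd_int_iff (l + 1) (B i j)).mpr (hall i j)
    have hD00 : Dp 0 0 = (p : ℤ_[p]) ^ l := by
      simp [hDp, Matrix.diagonal]
    rw [hD00] at hdvd00
    have := (pow_dvd_pow_iff PadicInt.prime_p.ne_zero PadicInt.prime_p.not_unit).mp hdvd00
    omega
  -- (c) |det B| = p ^ L
  have hDpdet : Dp.det = (p : ℤ_[p]) ^ L := by
    rw [hDp, Matrix.det_diagonal, Fin.prod_univ_two]
    show (p : ℤ_[p]) ^ l * (p : ℤ_[p]) ^ (l + k) = _
    rw [← pow_add]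
  have hdet2 : ((B.det : ℤ_[p])) =
      (U : Matrix (Fin 2) (Fin 2) ℤ_[p]).det * (p : ℤ_[p]) ^ L *
        (V : Matrix (Fin 2) (Fin 2) ℤ_[p]).det := by
    have hcongr := congrArg Matrix.det hB
    rw [Matrix.det_mul, Matrix.det_mul, hDpdet] at hcongr
    have hmap : (B.map (Int.cast : ℤ → ℤ_[p])).det = ((B.det : ℤ_[p])) := by
      rw [show B.map (Int.cast : ℤ → ℤ_[p]) = (Int.castRingHom ℤ_[p]).mapMatrix B from rfl,
        ← RingHom.map_det]
      rfl
    rw [hmap] at hcongr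
    exact hcongr
  obtain ⟨m, hm⟩ : ∃ m : ℕ, B.det.natAbs = p ^ m := by
    refine ⟨_, Nat.eq_prime_pow_of_unique_prime_dvd (Int.natAbs_ne_zero.mpr hdet) ?_⟩
    intro q hq' hdvd
    by_contra hne
    exact hq q hq' hne (Int.dvd_natAbs.mp (by exact_mod_cast Int.natCast_dvd_natCast.mpr hdvd))
  have hmL : m = L := by
    obtain ⟨u, hu⟩ := (Matrix.isUnit_iff_isUnit_det _).mp U.isUnit
    obtain ⟨v, hv⟩ := (Matrix.isUnit_iff_isUnit_det _).mp V.isUnit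
    obtain ⟨s, hsu, hs⟩ := exists_sign hm
    have hcast : ((B.det : ℤ_[p])) = ((s : ℤ_[p])) * (p : ℤ_[p]) ^ m := by
      rw [hs]; push_cast; ring
    have hsu2 : IsUnit ((s : ℤ) : ℤ_[p]) := by
      rcases Int.isUnit_iff.mp hsu with rfl | rfl
      · simp
      · simpa using isUnit_one.neg
    obtain ⟨w, hw⟩ := hsu2
    have hA1 : Associated ((p : ℤ_[p]) ^ L) ((B.det : ℤ_[p])) :=
      ⟨u * v, by rw [hdet2, ← hu, ← hv, Units.val_mul]; ring⟩
    have hA2 : Associated ((p : ℤ_[p]) ^ m) ((B.det : ℤ_[p])) :=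
      ⟨w, by rw [hcast, ← hw]; ring⟩
    have hA := hA1.trans hA2.symm
    have h1 := (pow_dvd_pow_iff PadicInt.prime_p.ne_zero PadicInt.prime_p.not_unit).mp hA.dvd
    have h2 := (pow_dvd_pow_iff PadicInt.prime_p.ne_zero PadicInt.prime_p.not_unit).mp hA.symm.dvd
    omega
  -- diagonalize over ℤ
  have hstart : ∃ C : M2, MEq B C ∧ C 0 0 ≠ 0 := by
    by_cases h00 : B 0 0 = 0
    · have hσ : (!![0, 1; 1, 0] : M2).det = -1 := by
        rw [Matrix.det_fin_two_of]; ring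
      have hσu : IsUnit (!![(0 : ℤ), 1; 1, 0] : M2).det := by
        rw [hσ]; exact isUnit_one.neg
      refine ⟨B * !![0, 1; 1, 0], MEq.mul_right _ hσu, ?_⟩
      have hb : B 0 1 ≠ 0 := by
        intro hb; apply hdet; rw [Matrix.det_fin_two, h00, hb]; ring
      rw [mul_apply2]
      show B 0 0 * (0 : ℤ) + B 0 1 * 1 ≠ 0
      rw [h00]; simpa using hb
    · exact ⟨B, MEq.refl B, h00⟩
  obtain ⟨C, hBC, hC00⟩ := hstart
  obtain ⟨d₁, d₂, hdiag⟩ := diagonalize (C 0 0).natAbs C le_rfl hC00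
  have hBdiag : MEq B (Matrix.diagonal ![d₁, d₂]) := hBC.trans hdiag
  obtain ⟨W, X, hWX⟩ := hBdiag
  have hWu : ((W : M2)).det.natAbs = 1 :=
    Int.isUnit_iff_natAbs_eq.mp ((Matrix.isUnit_iff_isUnit_det _).mp W.isUnit)
  have hXu : ((X : M2)).det.natAbs = 1 :=
    Int.isUnit_iff_natAbs_eq.mp ((Matrix.isUnit_iff_isUnit_det _).mp X.isUnit)
  have hdd : d₁ * d₂ = (W : M2).det * B.det * (X : M2).det := by
    have hc := congrArg Matrix.det hWX
    rw [Matrix.det_mul, Matrix.det_mul, Matrix.det_diagonal, Fin.prod_univ_two] at hc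
    simpa using hc
  have habs : d₁.natAbs * d₂.natAbs = p ^ L := by
    have hc := congrArg Int.natAbs hdd
    rw [Int.natAbs_mul, Int.natAbs_mul, Int.natAbs_mul, hWu, hXu, hm, hmL] at hc
    simpa using hc
  obtain ⟨a, haL, ha⟩ := (Nat.dvd_prime_pow hp).mp (⟨d₂.natAbs, habs.symm⟩ : d₁.natAbs ∣ p ^ L)
  have hbpow : d₂.natAbs = p ^ (L - a) := by
    have hpa : 0 < p ^ a := pow_pos hp.pos a
    apply Nat.eq_of_mul_eq_mul_left hpa
    rw [← pow_add]
    have haa : a + (L - a) = L := by omega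
    rw [haa, ← habs, ha]
  set b := L - a with hbdef
  have habL : a + b = L := by omega
  have hd1dvd : (p : ℤ) ^ l ∣ d₁ := by
    have hdv : (p : ℤ) ^ l ∣ (Matrix.diagonal ![d₁, d₂]) 0 0 := by
      rw [hWX]; exact dvd_entries _ _ hBl 0 0
    simpa [Matrix.diagonal_apply] using hdv
  have hd2dvd : (p : ℤ) ^ l ∣ d₂ := by
    have hdv : (p : ℤ) ^ l ∣ (Matrix.diagonal ![d₁, d₂]) 1 1 := by
      rw [hWX]; exact dvd_entries _ _ hBl 1 1
    simpa [Matrix.diagonal_apply] using hdv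
  have hla : l ≤ a := by
    have hdv := nat_dvd_of_int_dvd hd1dvd
    rw [ha] at hdv
    exact (Nat.pow_dvd_pow_iff_le_right hp.one_lt).mp hdv
  have hlb : l ≤ b := by
    have hdv := nat_dvd_of_int_dvd hd2dvd
    rw [hbpow] at hdv
    exact (Nat.pow_dvd_pow_iff_le_right hp.one_lt).mp hdv
  have hminl : a ≤ l ∨ b ≤ l := by
    by_contra hcon
    push_neg at hcon
    apply hnot
    intro i j
    obtain ⟨W', X', hB'⟩ := MEq.symm (⟨W, X, hWX⟩ : MEq B (Matrix.diagonal ![d₁, d₂]))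
    rw [hB']
    have e1 : (p : ℤ) ^ (l + 1) ∣ d₁ :=
      int_dvd_of_nat_dvd (by rw [ha]; exact Nat.pow_dvd_pow _ (by omega))
    have e2 : (p : ℤ) ^ (l + 1) ∣ d₂ :=
      int_dvd_of_nat_dvd (by rw [hbpow]; exact Nat.pow_dvd_pow _ (by omega))
    refine dvd_entries _ _ (fun i' j' => ?_) i j
    fin_cases i' <;> fin_cases j' <;> simp [Matrix.diagonal_apply, e1, e2]
  obtain ⟨s₁, hs₁u, hs₁⟩ := exists_sign ha
  obtain ⟨s₂, hs₂u, hs₂⟩ := exists_sign hbpow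
  obtain ⟨W', X', hB'⟩ := MEq.symm (⟨W, X, hWX⟩ : MEq B (Matrix.diagonal ![d₁, d₂]))
  rcases hminl with hal | hbl
  · -- a = l, b = l + k
    have hae : a = l := le_antisymm hal hla
    have hbe : b = l + k := by omega
    have hE : IsUnit (Matrix.diagonal ![s₁, s₂] : M2).det := by
      rw [Matrix.det_diagonal, Fin.prod_univ_two]
      exact hs₁u.mul hs₂u
    have hd1 : d₁ = (p : ℤ) ^ l * s₁ := by rw [hs₁, hae]; push_cast; ring
    have hd2 : d₂ = (p : ℤ) ^ (l + k) * s₂ := by rw [hs₂, hbe]; push_cast; ring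
    have hDE : Matrix.diagonal ![d₁, d₂] =
        Matrix.diagonal ![(p : ℤ) ^ l, (p : ℤ) ^ (l + k)] * Matrix.diagonal ![s₁, s₂] := by
      rw [Matrix.diagonal_mul_diagonal]
      refine congrArg Matrix.diagonal ?_
      funext i
      fin_cases i
      · exact hd1
      · exact hd2
    refine ⟨W', glOf _ hE * X', ?_⟩
    rw [hB', hDE, Units.val_mul, glOf_coe]
    simp only [mul_assoc]
  · -- b = l, a = l + k
    have hbe : b = l := le_antisymm hbl hlb
    have hae : a = l + k := by omega
    have hσdet : ((!![0, 1; 1, 0] : M2)).det = -1 := by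
      rw [Matrix.det_fin_two_of]; ring
    have hσ : IsUnit ((!![0, 1; 1, 0] : M2)).det := by
      rw [hσdet]; exact isUnit_one.neg
    have hF : IsUnit (Matrix.diagonal ![s₂, s₁] : M2).det := by
      rw [Matrix.det_diagonal, Fin.prod_univ_two]
      exact hs₂u.mul hs₁u
    have hkey : Matrix.diagonal ![d₁, d₂] =
        !![(0 : ℤ), 1; 1, 0] * Matrix.diagonal ![(p : ℤ) ^ l, (p : ℤ) ^ (l + k)] *
          (Matrix.diagonal ![s₂, s₁] * !![(0 : ℤ), 1; 1, 0]) := by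
      have hd1 : d₁ = s₁ * (p : ℤ) ^ (l + k) := by
        rw [hs₁, hae]; push_cast; ring
      have hd2 : d₂ = s₂ * (p : ℤ) ^ l := by
        rw [hs₂, hbe]; push_cast; ring
      have h1 : (!![(0 : ℤ), 1; 1, 0] : M2) *
          Matrix.diagonal ![(p : ℤ) ^ l, (p : ℤ) ^ (l + k)] =
          !![0, (p : ℤ) ^ (l + k); (p : ℤ) ^ l, 0] := by
        ext i j
        fin_cases i <;> fin_cases j <;>
          simp [mul_apply2, Matrix.diagonal_apply]
      have h2 : (Matrix.diagonal ![s₂, s₁] : M2) * !![(0 : ℤ), 1; 1, 0] =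
          !![0, s₂; s₁, 0] := by
        ext i j
        fin_cases i <;> fin_cases j <;>
          simp [mul_apply2, Matrix.diagonal_apply]
      have h3 : (!![(0 : ℤ), (p : ℤ) ^ (l + k); (p : ℤ) ^ l, 0] : M2) * !![0, s₂; s₁, 0] =
          !![(p : ℤ) ^ (l + k) * s₁, 0; 0, (p : ℤ) ^ l * s₂] := by
        ext i j
        fin_cases i <;> fin_cases j <;>
          simp [mul_apply2]
      rw [h1, h2, h3]
      ext i j
      fin_cases i <;> fin_cases j <;>
        simp [Matrix.diagonal_apply, hd1, hd2] <;> ring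
    refine ⟨W' * glOf _ hσ, glOf _ hF * (glOf _ hσ * X'), ?_⟩
    rw [hB', hkey]
    simp only [Units.val_mul, glOf_coe, mul_assoc]
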